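/- Assume condition (*). M-intervals do not overlap: if I = [i:k] and I' = [i':k'] are two M-intervals, then either I ∩ I' = ∅ or one of the intervals contains the other; in particular the configuration i < i' ≤ k < k' is impossible. -/

import Mathlib

open Finset

/-- Interval average `a_{[a:b]}(x) = (x_a + … + x_b)/(b-a+1)`. -/
noncomputable def iavg (x : ℤ → ℝ) (a b : ℤ) : ℝ :=
  (∑ j ∈ Finset.Icc a b, x j) / ((b - a + 1 : ℤ) : ℝ)

/-- Right maximal function `M^r x(i) = sup_{r ≥ 1} a_{[i : i+r−1]}(x)`. -/
noncomputable def Mr (x : ℤ → ℝ) (i : ℤ) : ℝ :=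
  sSup {a : ℝ | ∃ r : ℕ, 1 ≤ r ∧ a = iavg x i (i + (r : ℤ) - 1)}

/-- Condition (*): `x_1, …, x_n` are linearly independent over `ℚ`. -/
def StarCond (n : ℕ) (x : ℤ → ℝ) : Prop :=
  LinearIndependent ℚ (fun i : Fin n => x ((i : ℤ) + 1))

/-- `[i:k]` is a (short) maximal interval: `0 ≤ k − i < n` and
`a_{[i:k]}(x) = M^r x(i)`. -/
def IsMaxInt (n : ℕ) (x : ℤ → ℝ) (i k : ℤ) : Prop :=
  i ≤ k ∧ k - i < (n : ℤ) ∧ iavg x i k = Mr x i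

/-- `[i:k]` is an `M`-interval: maximal, and no `[i:k']` with `i ≤ k' < k`
is maximal. -/
def IsMInt (n : ℕ) (x : ℤ → ℝ) (i k : ℤ) : Prop :=
  IsMaxInt n x i k ∧ ∀ k' : ℤ, i ≤ k' → k' < k → iavg x i k' ≠ Mr x i

lemma per_mul {n : ℕ} {x : ℤ → ℝ} (hper : ∀ i, x (i + (n : ℤ)) = x i) :
    ∀ (m : ℤ) (i : ℤ), x (i + m * n) = x i := by
  intro m
  induction m using Int.induction_on with
  | zero => simp
  | succ m ih => intro i; have := hper (i + m * n); rw [show i + (m+1) * n = (i + m*n) + n by ring]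
                 rw [this, ih]
  | pred m ih => intro i
                 have h := hper (i + (-(m:ℤ)-1) * n)
                 rw [show i + (-(m:ℤ)-1) * n + n = i + (-(m:ℤ)) * n by ring] at h
                 rw [← h, ih i]

lemma bound {n : ℕ} (hn : 1 ≤ n) {x : ℤ → ℝ} (hper : ∀ i, x (i + (n : ℤ)) = x i) :
    ∃ M : ℝ, ∀ j, x j ≤ M := by
  refine ⟨(Finset.Icc (0:ℤ) ((n:ℤ)-1)).sup' (by simp; omega) x, fun j => ?_⟩
  have h1 : x j = x (j % n) := by
    have := per_mul hper (j / n) (j % n)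
    rw [show j % n + (j / n) * n = j by rw [mul_comm]; exact Int.emod_add_mul_ediv j n] at this
    exact this
  rw [h1]
  apply Finset.le_sup' x
  simp only [Finset.mem_Icc]
  constructor
  · exact Int.emod_nonneg j (by positivity)
  · have := Int.emod_lt_of_pos j (show (0:ℤ) < n by exact_mod_cast hn)
    omega

lemma iavg_le_bound {x : ℤ → ℝ} {M : ℝ} (hM : ∀ j, x j ≤ M) {a b : ℤ} (hab : a ≤ b) :
    iavg x a b ≤ M := by
  have hc : ((Finset.Icc a b).card : ℝ) = ((b - a + 1 : ℤ) : ℝ) := by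
    rw [Int.card_Icc]
    have h1 : ((b + 1 - a).toNat : ℤ) = b - a + 1 := by omega
    exact_mod_cast congrArg (Int.cast : ℤ → ℝ) h1
  have hsum : ∑ j ∈ Finset.Icc a b, x j ≤ (Finset.Icc a b).card • M :=
    Finset.sum_le_card_nsmul _ _ _ (fun j _ => hM j)
  rw [nsmul_eq_mul, hc] at hsum
  have hpos : (0:ℝ) < ((b - a + 1 : ℤ) : ℝ) := by exact_mod_cast (by omega : (0:ℤ) < b - a + 1)
  rw [iavg, div_le_iff₀ hpos]
  linarith [hsum]

lemma le_Mr {n : ℕ} (hn : 1 ≤ n) {x : ℤ → ℝ} (hper : ∀ i, x (i + (n : ℤ)) = x i)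
    {i j : ℤ} (hij : i ≤ j) : iavg x i j ≤ Mr x i := by
  obtain ⟨M, hM⟩ := bound hn hper
  apply le_csSup
  · refine ⟨M, fun a ha => ?_⟩
    obtain ⟨r, hr, rfl⟩ := ha
    exact iavg_le_bound hM (by omega)
  · refine ⟨(j - i + 1).toNat, by omega, ?_⟩
    have : ((j - i + 1).toNat : ℤ) = j - i + 1 := Int.toNat_of_nonneg (by omega)
    rw [show i + ((j - i + 1).toNat : ℤ) - 1 = j by omega]

lemma sum_split (x : ℤ → ℝ) {a b c : ℤ} (h1 : a ≤ b) (h2 : b < c) :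
    ∑ j ∈ Finset.Icc a c, x j = ∑ j ∈ Finset.Icc a b, x j + ∑ j ∈ Finset.Icc (b+1) c, x j := by
  rw [show Finset.Icc a c = Finset.Icc a b ∪ Finset.Icc (b+1) c by
        ext t; simp only [Finset.mem_union, Finset.mem_Icc]; omega]
  exact Finset.sum_union (by simp only [Finset.disjoint_left, Finset.mem_Icc]; omega)

lemma no_config (n : ℕ) (hn : 1 ≤ n) (x : ℤ → ℝ)
    (hper : ∀ i, x (i + (n : ℤ)) = x i) (i k i' k' : ℤ)
    (hI : IsMInt n x i k) (hI' : IsMInt n x i' k') :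
    ¬(i < i' ∧ i' ≤ k ∧ k < k') := by
  rintro ⟨h1, h2, h3⟩
  obtain ⟨⟨hik, -, havg⟩, hmin⟩ := hI
  obtain ⟨⟨hik', -, havg'⟩, -⟩ := hI'
  set m := Mr x i with hm
  set m' := Mr x i' with hm'
  -- strict inequality below m on the initial segment
  have hlt : iavg x i (i'-1) < m :=
    lt_of_le_of_ne (le_Mr hn hper (by omega)) (hmin (i'-1) (by omega) (by omega))
  have hle2 : iavg x i' k ≤ m' := le_Mr hn hper h2
  have hle3 : iavg x i k' ≤ m := le_Mr hn hper (by omega)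
  -- sum splittings
  have e1 : ∑ j ∈ Finset.Icc i k, x j
      = ∑ j ∈ Finset.Icc i (i'-1), x j + ∑ j ∈ Finset.Icc i' k, x j := by
    have h := sum_split x (a := i) (b := i'-1) (c := k) (by omega) (by omega)
    rwa [show i' - 1 + 1 = i' by ring] at h
  have e2 : ∑ j ∈ Finset.Icc i' k', x j
      = ∑ j ∈ Finset.Icc i' k, x j + ∑ j ∈ Finset.Icc (k+1) k', x j := sum_split x h2 h3
  have e3 : ∑ j ∈ Finset.Icc i k', x j
      = ∑ j ∈ Finset.Icc i k, x j + ∑ j ∈ Finset.Icc (k+1) k', x j :=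
    sum_split x (by omega) h3
  -- positivity of lengths
  have p1 : (0:ℝ) < (((i'-1) - i + 1 : ℤ) : ℝ) := by
    exact_mod_cast (show (0:ℤ) < (i'-1) - i + 1 by omega)
  have p2 : (0:ℝ) < ((k - i + 1 : ℤ) : ℝ) := by
    exact_mod_cast (show (0:ℤ) < k - i + 1 by omega)
  have p3 : (0:ℝ) < ((k - i' + 1 : ℤ) : ℝ) := by
    exact_mod_cast (show (0:ℤ) < k - i' + 1 by omega)
  have p4 : (0:ℝ) < ((k' - i' + 1 : ℤ) : ℝ) := by
    exact_mod_cast (show (0:ℤ) < k' - i' + 1 by omega)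
  have p5 : (0:ℝ) < ((k' - i + 1 : ℤ) : ℝ) := by
    exact_mod_cast (show (0:ℤ) < k' - i + 1 by omega)
  have p6 : (0:ℝ) < ((k' - k : ℤ) : ℝ) := by
    exact_mod_cast (show (0:ℤ) < k' - k by omega)
  rw [iavg, div_lt_iff₀ p1] at hlt
  rw [iavg, div_eq_iff (ne_of_gt p2)] at havg
  rw [iavg, div_le_iff₀ p3] at hle2
  rw [iavg, div_eq_iff (ne_of_gt p4)] at havg'
  rw [iavg, div_le_iff₀ p5] at hle3
  set S1 := ∑ j ∈ Finset.Icc i (i'-1), x j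
  set S2 := ∑ j ∈ Finset.Icc i' k, x j
  set S3 := ∑ j ∈ Finset.Icc (k+1) k', x j
  rw [e1] at havg
  rw [e2] at havg'
  rw [e3, e1] at hle3
  push_cast at hlt havg hle2 havg' hle3 p1 p2 p3 p4 p5 p6
  -- S2 > (k - i' + 1) m
  have hS2 : ((k:ℝ) - i' + 1) * m < S2 := by nlinarith
  have hmm' : m < m' := by nlinarith
  have hS3 : ((k':ℝ) - k) * m' ≤ S3 := by nlinarith
  nlinarith [mul_pos p6 (sub_pos.2 hmm')]

/-- `M`-intervals do not overlap: two `M`-intervals are either disjoint or one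
contains the other; in particular `i < i' ≤ k < k'` is impossible. -/
theorem MInt_nonoverlap (n : ℕ) (hn : 1 ≤ n) (x : ℤ → ℝ)
    (hpos : ∀ i, 0 ≤ x i) (hper : ∀ i, x (i + (n : ℤ)) = x i)
    (hstar : StarCond n x) (i k i' k' : ℤ)
    (hI : IsMInt n x i k) (hI' : IsMInt n x i' k') :
    (Disjoint (Finset.Icc i k) (Finset.Icc i' k') ∨
      Finset.Icc i k ⊆ Finset.Icc i' k' ∨ Finset.Icc i' k' ⊆ Finset.Icc i k) ∧
    ¬(i < i' ∧ i' ≤ k ∧ k < k') := by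
  have key := no_config n hn x hper i k i' k' hI hI'
  have key' := no_config n hn x hper i' k' i k hI' hI
  refine ⟨?_, key⟩
  have hik : i ≤ k := hI.1.1
  have hik' : i' ≤ k' := hI'.1.1
  by_cases hd : k < i' ∨ k' < i
  · left
    rw [Finset.disjoint_left]
    intro t ht ht'
    simp only [Finset.mem_Icc] at ht ht'
    omega
  · right
    push_neg at hd
    obtain ⟨hd1, hd2⟩ := hd
    by_cases hc1 : i' ≤ i ∧ k ≤ k'
    · exact Or.inl (Finset.Icc_subset_Icc hc1.1 hc1.2)
    by_cases hc2 : i ≤ i' ∧ k' ≤ k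
    · exact Or.inr (Finset.Icc_subset_Icc hc2.1 hc2.2)
    exfalso
    rcases le_or_gt i i' with h | h
    · exact key ⟨by omega, by omega, by omega⟩
    · exact key' ⟨by omega, by omega, by omega⟩
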